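/- arXiv:0901.1378 — 3 statements merged into one kernel-verified Lean document; each statement's English description precedes it below -/
import Mathlib

section
/- Lipschitz dependence of the adaptive kernel on the auxiliary measure (Lemma 4.2). Fix β ∈ [0, 1]. For any two probability measures μ and ν on (X, B), the kernels P_μ and P_ν, viewed as linear operators on L^∞_{V^β}, satisfy |||P_μ − P_ν|||_{V^β} ≤ 2 ‖μ − ν‖_{V^β}. -/
open MeasureTheory Real Filter
open scoped ENNReal

noncomputable section

variable {𝒳 : Type*} [MeasurableSpace 𝒳]

/-- Equi-energy swap acceptance probability. -/
def accept (τ : ℝ) (E : 𝒳 → ℝ) (y x : 𝒳) : ℝ :=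
  min 1 (Real.exp (-τ * E y) / Real.exp (-τ * E x))

/-- The equi-energy swap kernel `T(y, x, ·)`. -/
def swapK (τ : ℝ) (E : 𝒳 → ℝ) (y x : 𝒳) : Measure 𝒳 :=
  ENNReal.ofReal (accept τ E y x) • Measure.dirac y
    + ENNReal.ofReal (1 - accept τ E y x) • Measure.dirac x

/-- The adaptive kernel `P_μ = θ P + (1-θ) ∫ μ(dy) T(y, ·, ·)`. -/
def adaptK (θ τ : ℝ) (E : 𝒳 → ℝ) (P : 𝒳 → Measure 𝒳) (μ : Measure 𝒳) (x : 𝒳) :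
    Measure 𝒳 :=
  ENNReal.ofReal θ • P x + ENNReal.ofReal (1 - θ) • μ.bind (fun y => swapK τ E y x)

/-- `W`-norm distance `‖μ − ν‖_W` between measures. -/
def vdist (W : 𝒳 → ℝ) (μ ν : Measure 𝒳) : ℝ≥0∞ :=
  ⨆ g ∈ {g : 𝒳 → ℝ | Measurable g ∧ ∀ x, |g x| ≤ W x},
    ENNReal.ofReal |∫ x, g x ∂μ - ∫ x, g x ∂ν|

section AuxLemmas

lemma accept_nonneg (τ : ℝ) (E : 𝒳 → ℝ) (y x : 𝒳) : 0 ≤ accept τ E y x :=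
  le_min zero_le_one (div_nonneg (Real.exp_pos _).le (Real.exp_pos _).le)

lemma accept_le_one (τ : ℝ) (E : 𝒳 → ℝ) (y x : 𝒳) : accept τ E y x ≤ 1 :=
  min_le_left _ _

lemma measurable_accept (τ : ℝ) {E : 𝒳 → ℝ} (hE : Measurable E) (x : 𝒳) :
    Measurable (fun y => accept τ E y x) := by
  unfold accept
  exact measurable_const.min ((Real.measurable_exp.comp (hE.const_mul (-τ))).div_const _)

lemma measurable_swapK (τ : ℝ) {E : 𝒳 → ℝ} (hE : Measurable E) (x : 𝒳) :
    Measurable (fun y => swapK τ E y x) := by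
  apply Measure.measurable_of_measurable_coe
  intro s hs
  simp only [swapK, Measure.coe_add, Pi.add_apply, Measure.smul_apply, smul_eq_mul]
  apply Measurable.add
  · exact (ENNReal.measurable_ofReal.comp (measurable_accept τ hE x)).mul
      ((Measure.measurable_coe hs).comp Measure.measurable_dirac)
  · exact (ENNReal.measurable_ofReal.comp
      (measurable_const.sub (measurable_accept τ hE x))).mul_const _

lemma bind_swapK (τ : ℝ) {E : 𝒳 → ℝ} (hE : Measurable E) (x : 𝒳) (μ : Measure 𝒳) :
    μ.bind (fun y => swapK τ E y x)
      = μ.withDensity (fun y => ENNReal.ofReal (accept τ E y x))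
        + (∫⁻ y, ENNReal.ofReal (1 - accept τ E y x) ∂μ) • Measure.dirac x := by
  ext s hs
  rw [Measure.bind_apply hs (measurable_swapK τ hE x).aemeasurable]
  have h1 : ∀ y, (swapK τ E y x) s
      = s.indicator (fun y => ENNReal.ofReal (accept τ E y x)) y
        + ENNReal.ofReal (1 - accept τ E y x) * (Measure.dirac x) s := by
    intro y
    simp only [swapK, Measure.coe_add, Pi.add_apply, Measure.smul_apply, smul_eq_mul,
      Measure.dirac_apply' _ hs]
    congr 1
    by_cases hy : y ∈ s <;> simp [hy]
  simp_rw [h1]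
  rw [lintegral_add_right, lintegral_indicator hs, lintegral_mul_const]
  · simp [Measure.smul_apply, smul_eq_mul, withDensity_apply _ hs,
      Measure.restrict_apply, setLIntegral_one]
  · exact ENNReal.measurable_ofReal.comp (measurable_const.sub (measurable_accept τ hE x))
  · exact (ENNReal.measurable_ofReal.comp
      (measurable_const.sub (measurable_accept τ hE x))).mul_const _

lemma lint_one_sub_accept_le_one (τ : ℝ) (E : 𝒳 → ℝ) (x : 𝒳) (μ : Measure 𝒳)
    [IsProbabilityMeasure μ] :
    (∫⁻ y, ENNReal.ofReal (1 - accept τ E y x) ∂μ) ≤ 1 := by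
  calc (∫⁻ y, ENNReal.ofReal (1 - accept τ E y x) ∂μ) ≤ ∫⁻ _, 1 ∂μ := by
        refine lintegral_mono fun y => ?_
        exact ENNReal.ofReal_le_one.mpr (by linarith [accept_nonneg τ E y x])
    _ = 1 := by simp

lemma integrable_dirac' [MeasurableSingletonClass 𝒳] {f : 𝒳 → ℝ} (hf : Measurable f) (x : 𝒳) :
    Integrable f (Measure.dirac x) := by
  refine ⟨hf.aestronglyMeasurable, ?_⟩
  unfold HasFiniteIntegral
  rw [lintegral_dirac]
  exact ENNReal.coe_lt_top

lemma integrable_accept (τ : ℝ) {E : 𝒳 → ℝ} (hE : Measurable E) (x : 𝒳) (μ : Measure 𝒳)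
    [IsProbabilityMeasure μ] : Integrable (fun y => accept τ E y x) μ := by
  refine (integrable_const (1 : ℝ)).mono' (measurable_accept τ hE x).aestronglyMeasurable ?_
  refine Eventually.of_forall fun y => ?_
  rw [Real.norm_eq_abs, abs_le]
  exact ⟨by linarith [accept_nonneg τ E y x], accept_le_one τ E y x⟩

lemma integrable_bind_swapK_iff [MeasurableSingletonClass 𝒳] (τ : ℝ) {E : 𝒳 → ℝ}
    (hE : Measurable E) {f : 𝒳 → ℝ} (hf : Measurable f) (x : 𝒳) (μ : Measure 𝒳)
    [IsProbabilityMeasure μ] :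
    Integrable f (μ.bind fun y => swapK τ E y x)
      ↔ Integrable (fun y => accept τ E y x * f y) μ := by
  rw [bind_swapK τ hE x μ, integrable_add_measure]
  have h2 : Integrable f ((∫⁻ y, ENNReal.ofReal (1 - accept τ E y x) ∂μ) • Measure.dirac x) :=
    (integrable_dirac' hf x).smul_measure
      (lt_of_le_of_lt (lint_one_sub_accept_le_one τ E x μ) ENNReal.one_lt_top).ne
  have key : Integrable f (μ.withDensity fun y => ENNReal.ofReal (accept τ E y x))
      ↔ Integrable (fun y => (accept τ E y x).toNNReal • f y) μ :=
    integrable_withDensity_iff_integrable_smul ((measurable_accept τ hE x).real_toNNReal)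
  rw [key]
  constructor
  · rintro ⟨h1, -⟩
    refine h1.congr (Eventually.of_forall fun y => ?_)
    simp [NNReal.smul_def, Real.coe_toNNReal _ (accept_nonneg τ E y x)]
  · intro h1
    refine ⟨h1.congr (Eventually.of_forall fun y => ?_), h2⟩
    simp [NNReal.smul_def, Real.coe_toNNReal _ (accept_nonneg τ E y x)]

lemma integral_bind_swapK [MeasurableSingletonClass 𝒳] (τ : ℝ) {E : 𝒳 → ℝ}
    (hE : Measurable E) {f : 𝒳 → ℝ} (hf : Measurable f) (x : 𝒳) (μ : Measure 𝒳)
    [IsProbabilityMeasure μ] (hi : Integrable (fun y => accept τ E y x * f y) μ) :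
    ∫ y, f y ∂(μ.bind fun y => swapK τ E y x)
      = ∫ y, accept τ E y x * f y ∂μ + (∫ y, (1 - accept τ E y x) ∂μ) * f x := by
  have hint : Integrable (fun y => 1 - accept τ E y x) μ :=
    (integrable_const (1 : ℝ)).sub (integrable_accept τ hE x μ)
  have hc : (∫⁻ y, ENNReal.ofReal (1 - accept τ E y x) ∂μ)
      = ENNReal.ofReal (∫ y, (1 - accept τ E y x) ∂μ) :=
    (ofReal_integral_eq_lintegral_ofReal hint
      (Eventually.of_forall fun y => by
        simpa using (by linarith [accept_le_one τ E y x] : (0:ℝ) ≤ 1 - accept τ E y x))).symm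
  have h2 : Integrable f ((∫⁻ y, ENNReal.ofReal (1 - accept τ E y x) ∂μ) • Measure.dirac x) :=
    (integrable_dirac' hf x).smul_measure
      (lt_of_le_of_lt (lint_one_sub_accept_le_one τ E x μ) ENNReal.one_lt_top).ne
  have key : Integrable f (μ.withDensity fun y => ENNReal.ofReal (accept τ E y x))
      ↔ Integrable (fun y => (accept τ E y x).toNNReal • f y) μ :=
    integrable_withDensity_iff_integrable_smul ((measurable_accept τ hE x).real_toNNReal)
  have h1 : Integrable f (μ.withDensity (fun y => ENNReal.ofReal (accept τ E y x))) := by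
    rw [key]
    refine hi.congr (Eventually.of_forall fun y => ?_)
    simp [NNReal.smul_def, Real.coe_toNNReal _ (accept_nonneg τ E y x)]
  rw [bind_swapK τ hE x μ, integral_add_measure h1 h2]
  congr 1
  · have key2 : (∫ y, f y ∂(μ.withDensity fun y => ENNReal.ofReal (accept τ E y x)))
        = ∫ y, (accept τ E y x).toNNReal • f y ∂μ :=
      integral_withDensity_eq_integral_smul ((measurable_accept τ hE x).real_toNNReal) f
    rw [key2]
    refine integral_congr_ae (Eventually.of_forall fun y => ?_)
    simp [NNReal.smul_def, Real.coe_toNNReal _ (accept_nonneg τ E y x)]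
  · rw [integral_smul_measure, integral_dirac, hc, ENNReal.toReal_ofReal
      (integral_nonneg fun y => by
        simpa using (by linarith [accept_le_one τ E y x] : (0:ℝ) ≤ 1 - accept τ E y x))]
    simp [smul_eq_mul]

lemma le_vdist {W : 𝒳 → ℝ} {μ ν : Measure 𝒳} {g : 𝒳 → ℝ} (hgm : Measurable g)
    (hgW : ∀ y, |g y| ≤ W y) :
    ENNReal.ofReal |∫ y, g y ∂μ - ∫ y, g y ∂ν| ≤ vdist W μ ν :=
  le_iSup₂_of_le g ⟨hgm, hgW⟩ le_rfl

lemma vdist_comm (W : 𝒳 → ℝ) (μ ν : Measure 𝒳) : vdist W μ ν = vdist W ν μ := by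
  unfold vdist
  congr 1
  ext g
  congr 1
  ext hg
  rw [abs_sub_comm]

lemma vdist_eq_top {W g : 𝒳 → ℝ} (hgm : Measurable g) (hgW : ∀ y, |g y| ≤ W y)
    (μ ν : Measure 𝒳) [IsFiniteMeasure μ]
    (hgν : Integrable g ν) (hgμ : ¬ Integrable g μ) : vdist W μ ν = ⊤ := by
  set h : ℕ → 𝒳 → ℝ := fun n y => if |g y| ≤ (n : ℝ) then |g y| else 0 with hh
  have hm : ∀ n, Measurable (h n) := fun n =>
    Measurable.ite (measurableSet_le hgm.abs measurable_const) hgm.abs measurable_const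
  have hnn : ∀ n y, 0 ≤ h n y := by
    intro n y; simp only [hh]; split_ifs
    · exact abs_nonneg _
    · exact le_rfl
  have hle_abs : ∀ n y, h n y ≤ |g y| := by
    intro n y; simp only [hh]; split_ifs
    · exact le_rfl
    · exact abs_nonneg _
  have hb : ∀ n y, |h n y| ≤ W y := by
    intro n y
    rw [abs_of_nonneg (hnn n y)]
    exact (hle_abs n y).trans (hgW y)
  have hIntμ : ∀ n, Integrable (h n) μ := by
    intro n
    refine (integrable_const ((n : ℝ))).mono' (hm n).aestronglyMeasurable ?_
    refine Eventually.of_forall fun y => ?_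
    rw [Real.norm_eq_abs, abs_of_nonneg (hnn n y)]
    simp only [hh]; split_ifs with hy
    · exact hy
    · exact Nat.cast_nonneg n
  have hIntν : ∀ n, Integrable (h n) ν := fun n =>
    hgν.abs.mono' (hm n).aestronglyMeasurable
      (Eventually.of_forall fun y => by
        rw [Real.norm_eq_abs, abs_of_nonneg (hnn n y)]
        exact hle_abs n y)
  set L : ℝ := ∫ y, |g y| ∂ν with hL
  have hL0 : 0 ≤ L := integral_nonneg fun y => abs_nonneg _
  have hνle : ∀ n, ∫ y, h n y ∂ν ≤ L :=
    fun n => integral_mono (hIntν n) hgν.abs (fun y => hle_abs n y)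
  have hofReal : ∀ n, (∫⁻ y, ENNReal.ofReal (h n y) ∂μ) = ENNReal.ofReal (∫ y, h n y ∂μ) :=
    fun n => (ofReal_integral_eq_lintegral_ofReal (hIntμ n)
      (Eventually.of_forall fun y => by simpa using hnn n y)).symm
  have htop : (⨆ n, ∫⁻ y, ENNReal.ofReal (h n y) ∂μ) = ⊤ := by
    have hmono : Monotone (fun n => fun y => ENNReal.ofReal (h n y)) := by
      intro m n hmn y
      refine ENNReal.ofReal_le_ofReal ?_
      simp only [hh]
      split_ifs with h1 h2 h2
      · exact le_rfl
      · exact absurd (h1.trans (Nat.cast_le.mpr hmn)) h2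
      · exact abs_nonneg _
      · exact le_rfl
    rw [← lintegral_iSup (fun n => (hm n).ennreal_ofReal) hmono]
    have hsup : ∀ y, (⨆ n, ENNReal.ofReal (h n y)) = ENNReal.ofReal |g y| := by
      intro y
      refine le_antisymm (iSup_le fun n => ENNReal.ofReal_le_ofReal (hle_abs n y)) ?_
      refine le_iSup_of_le (Nat.ceil |g y|) (le_of_eq ?_)
      simp only [hh]
      rw [if_pos (Nat.le_ceil _)]
    simp_rw [hsup]
    have hfin : ¬ HasFiniteIntegral g μ := by
      intro hfi
      exact hgμ ⟨hgm.aestronglyMeasurable, hfi⟩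
    have : ∫⁻ y, ENNReal.ofReal |g y| ∂μ = ∫⁻ y, ‖g y‖₊ ∂μ := by
      refine lintegral_congr fun y => ?_
      rw [← Real.norm_eq_abs]
      exact ofReal_norm (g y)
    rw [this]
    by_contra hne
    exact hfin (lt_top_iff_ne_top.mpr hne)
  by_contra hne
  set r : ℝ := (vdist W μ ν).toReal with hr
  have hr0 : 0 ≤ r := ENNReal.toReal_nonneg
  have hvr : vdist W μ ν = ENNReal.ofReal r := (ENNReal.ofReal_toReal hne).symm
  have hlt : ENNReal.ofReal (r + L + 1) < ⨆ n, ∫⁻ y, ENNReal.ofReal (h n y) ∂μ := by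
    rw [htop]; exact ENNReal.ofReal_lt_top
  obtain ⟨n, hn⟩ := lt_iSup_iff.mp hlt
  rw [hofReal n] at hn
  have hlt2 : r + L + 1 < ∫ y, h n y ∂μ :=
    (ENNReal.ofReal_lt_ofReal_iff_of_nonneg (by linarith)).mp hn
  have hge : r + 1 ≤ |∫ y, h n y ∂μ - ∫ y, h n y ∂ν| := by
    have := hνle n
    calc r + 1 ≤ ∫ y, h n y ∂μ - ∫ y, h n y ∂ν := by linarith
      _ ≤ |∫ y, h n y ∂μ - ∫ y, h n y ∂ν| := le_abs_self _
  have hle := le_vdist (μ := μ) (ν := ν) (hm n) (hb n)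
  rw [hvr] at hle
  have := (ENNReal.ofReal_le_ofReal_iff hr0).mp ((ENNReal.ofReal_le_ofReal hge).trans hle)
  linarith

end AuxLemmas

/-- **Lipschitz dependence of the adaptive kernel on the auxiliary measure** (Lemma 4.2):
for `β ∈ [0,1]` and probability measures `μ, ν`, the operator-norm bound
`|||P_μ − P_ν|||_{V^β} ≤ 2 ‖μ − ν‖_{V^β}` holds; that is, for every `f` with
`|f|_{V^β} ≤ 1` and every `x`, `|P_μ f(x) − P_ν f(x)| ≤ 2 ‖μ − ν‖_{V^β} V^β(x)`. -/
theorem adaptK_lipschitz_in_measure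
    [TopologicalSpace 𝒳] [PolishSpace 𝒳] [BorelSpace 𝒳]
    (E : 𝒳 → ℝ) (hEcont : Continuous E) (hEbdd : BddBelow (Set.range E))
    (t t' τ : ℝ) (ht : 0 < t) (htt' : t < t') (hτ : τ = 1 / t - 1 / t')
    (c κ : ℝ) (hc : 0 < c) (hκpos : 0 < κ) (hκ1 : κ < 1) (hκτ : κ < τ)
    (V : 𝒳 → ℝ) (hV : ∀ x, V x = c * Real.exp (κ * E x)) (hV1 : ∀ x, 1 ≤ V x)
    (P : 𝒳 → Measure 𝒳) (hPmeas : Measurable P) (hPprob : ∀ x, IsProbabilityMeasure (P x))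
    (θ : ℝ) (hθ : θ ∈ Set.Ioc (0 : ℝ) 1)
    (β : ℝ) (hβ : β ∈ Set.Icc (0 : ℝ) 1)
    (μ ν : Measure 𝒳) [IsProbabilityMeasure μ] [IsProbabilityMeasure ν] :
    ∀ f : 𝒳 → ℝ, Measurable f → (∀ x, |f x| ≤ V x ^ β) →
      ∀ x, ENNReal.ofReal |(∫ y, f y ∂(adaptK θ τ E P μ x)) - ∫ y, f y ∂(adaptK θ τ E P ν x)|
        ≤ 2 * vdist (fun y => V y ^ β) μ ν * ENNReal.ofReal (V x ^ β) := by
  intro f hfm hfb x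
  have hE : Measurable E := hEcont.measurable
  have hW1 : ∀ y, (1:ℝ) ≤ V y ^ β := fun y => Real.one_le_rpow (hV1 y) hβ.1
  have hWx0 : (0:ℝ) < V x ^ β := lt_of_lt_of_le one_pos (hW1 x)
  -- trivial case θ = 1
  by_cases hθ1 : θ = 1
  · have hmeas : adaptK θ τ E P μ x = adaptK θ τ E P ν x := by
      unfold adaptK
      rw [hθ1]
      simp
    rw [hmeas, sub_self, abs_zero, ENNReal.ofReal_zero]
    exact zero_le
  have hθlt : θ < 1 := lt_of_le_of_ne hθ.2 hθ1
  have h1mθ : ENNReal.ofReal (1 - θ) ≠ 0 := by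
    simp only [ne_eq, ENNReal.ofReal_eq_zero, not_le]
    linarith
  have hθ0 : ENNReal.ofReal θ ≠ 0 := by
    simp only [ne_eq, ENNReal.ofReal_eq_zero, not_le]
    exact hθ.1
  have hg1m : Measurable (fun y => accept τ E y x * f y) :=
    (measurable_accept τ hE x).mul hfm
  have hg1W : ∀ y, |accept τ E y x * f y| ≤ V y ^ β := by
    intro y
    rw [abs_mul]
    calc |accept τ E y x| * |f y| ≤ 1 * (V y ^ β) := by
          refine mul_le_mul ?_ (hfb y) (abs_nonneg _) zero_le_one
          rw [abs_of_nonneg (accept_nonneg τ E y x)]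
          exact accept_le_one τ E y x
      _ = V y ^ β := one_mul _
  by_cases hμI : Integrable (fun y => accept τ E y x * f y) μ
  · by_cases hνI : Integrable (fun y => accept τ E y x * f y) ν
    · -- main case
      by_cases hfP : Integrable f (P x)
      · have hbindμ : Integrable f (μ.bind fun y => swapK τ E y x) :=
          (integrable_bind_swapK_iff τ hE hfm x μ).mpr hμI
        have hbindν : Integrable f (ν.bind fun y => swapK τ E y x) :=
          (integrable_bind_swapK_iff τ hE hfm x ν).mpr hνI
        have hIA : Integrable f (ENNReal.ofReal θ • P x) :=
          hfP.smul_measure ENNReal.ofReal_ne_top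
        have hint : ∀ (ρ : Measure 𝒳) [IsProbabilityMeasure ρ],
            Integrable f (ρ.bind fun y => swapK τ E y x) →
            Integrable (fun y => accept τ E y x * f y) ρ →
            ∫ y, f y ∂(adaptK θ τ E P ρ x)
              = θ * ∫ y, f y ∂(P x)
                + (1 - θ) * ((∫ y, accept τ E y x * f y ∂ρ)
                    + (∫ y, (1 - accept τ E y x) ∂ρ) * f x) := by
          intro ρ _ hbind hI
          unfold adaptK
          rw [integral_add_measure hIA (hbind.smul_measure ENNReal.ofReal_ne_top),
            integral_smul_measure, integral_smul_measure,
            integral_bind_swapK τ hE hfm x ρ hI,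
            ENNReal.toReal_ofReal hθ.1.le, ENNReal.toReal_ofReal (by linarith : (0:ℝ) ≤ 1 - θ)]
          simp [smul_eq_mul]
        rw [hint μ hbindμ hμI, hint ν hbindν hνI]
        -- the auxiliary test function
        set hfun : 𝒳 → ℝ := fun y => (f x / V x ^ β) * (1 - accept τ E y x) with hhfun
        have hhm : Measurable hfun :=
          (measurable_const.sub (measurable_accept τ hE x)).const_mul _
        have hhW : ∀ y, |hfun y| ≤ V y ^ β := by
          intro y
          simp only [hhfun]
          rw [abs_mul]
          refine le_trans (mul_le_one₀ ?_ (abs_nonneg _) ?_) (hW1 y)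
          · rw [abs_div, abs_of_pos hWx0, div_le_one hWx0]
            exact hfb x
          · rw [abs_le]
            constructor <;> [linarith [accept_le_one τ E y x]; linarith [accept_nonneg τ E y x]]
        have hDh : ∀ (ρ : Measure 𝒳), ∫ y, hfun y ∂ρ
            = (f x / V x ^ β) * ∫ y, (1 - accept τ E y x) ∂ρ := by
          intro ρ
          simp only [hhfun]
          exact integral_const_mul _ _
        have hfx : ∀ (ρ σ : Measure 𝒳),
            ((∫ y, (1 - accept τ E y x) ∂ρ) - ∫ y, (1 - accept τ E y x) ∂σ) * f x
              = V x ^ β * ((∫ y, hfun y ∂ρ) - ∫ y, hfun y ∂σ) := by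
          intro ρ σ
          rw [hDh, hDh]
          field_simp
        -- the real inequality
        have key : |(θ * ∫ y, f y ∂(P x)
                + (1 - θ) * ((∫ y, accept τ E y x * f y ∂μ)
                    + (∫ y, (1 - accept τ E y x) ∂μ) * f x))
              - (θ * ∫ y, f y ∂(P x)
                + (1 - θ) * ((∫ y, accept τ E y x * f y ∂ν)
                    + (∫ y, (1 - accept τ E y x) ∂ν) * f x))|
            ≤ |(∫ y, accept τ E y x * f y ∂μ) - ∫ y, accept τ E y x * f y ∂ν|
              + V x ^ β * |(∫ y, hfun y ∂μ) - ∫ y, hfun y ∂ν| := by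
          have e1 : (θ * ∫ y, f y ∂(P x)
                + (1 - θ) * ((∫ y, accept τ E y x * f y ∂μ)
                    + (∫ y, (1 - accept τ E y x) ∂μ) * f x))
              - (θ * ∫ y, f y ∂(P x)
                + (1 - θ) * ((∫ y, accept τ E y x * f y ∂ν)
                    + (∫ y, (1 - accept τ E y x) ∂ν) * f x))
              = (1 - θ) * (((∫ y, accept τ E y x * f y ∂μ) - ∫ y, accept τ E y x * f y ∂ν)
                  + V x ^ β * ((∫ y, hfun y ∂μ) - ∫ y, hfun y ∂ν)) := by
            rw [← hfx μ ν]
            ring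
          rw [e1, abs_mul, abs_of_nonneg (by linarith : (0:ℝ) ≤ 1 - θ)]
          calc (1 - θ) * |((∫ y, accept τ E y x * f y ∂μ) - ∫ y, accept τ E y x * f y ∂ν)
                  + V x ^ β * ((∫ y, hfun y ∂μ) - ∫ y, hfun y ∂ν)|
              ≤ 1 * |((∫ y, accept τ E y x * f y ∂μ) - ∫ y, accept τ E y x * f y ∂ν)
                  + V x ^ β * ((∫ y, hfun y ∂μ) - ∫ y, hfun y ∂ν)| :=
                mul_le_mul_of_nonneg_right (by linarith [hθ.1]) (abs_nonneg _)
            _ ≤ |(∫ y, accept τ E y x * f y ∂μ) - ∫ y, accept τ E y x * f y ∂ν|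
                  + V x ^ β * |(∫ y, hfun y ∂μ) - ∫ y, hfun y ∂ν| := by
                rw [one_mul]
                refine (abs_add_le _ _).trans ?_
                rw [abs_mul, abs_of_pos hWx0]
        calc ENNReal.ofReal |(θ * ∫ y, f y ∂(P x)
                + (1 - θ) * ((∫ y, accept τ E y x * f y ∂μ)
                    + (∫ y, (1 - accept τ E y x) ∂μ) * f x))
              - (θ * ∫ y, f y ∂(P x)
                + (1 - θ) * ((∫ y, accept τ E y x * f y ∂ν)
                    + (∫ y, (1 - accept τ E y x) ∂ν) * f x))|
            ≤ ENNReal.ofReal (|(∫ y, accept τ E y x * f y ∂μ) - ∫ y, accept τ E y x * f y ∂ν|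
              + V x ^ β * |(∫ y, hfun y ∂μ) - ∫ y, hfun y ∂ν|) := ENNReal.ofReal_le_ofReal key
          _ = ENNReal.ofReal |(∫ y, accept τ E y x * f y ∂μ) - ∫ y, accept τ E y x * f y ∂ν|
              + ENNReal.ofReal (V x ^ β)
                * ENNReal.ofReal |(∫ y, hfun y ∂μ) - ∫ y, hfun y ∂ν| := by
              rw [ENNReal.ofReal_add (abs_nonneg _) (by positivity),
                ENNReal.ofReal_mul hWx0.le]
          _ ≤ vdist (fun y => V y ^ β) μ ν
              + ENNReal.ofReal (V x ^ β) * vdist (fun y => V y ^ β) μ ν :=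
              add_le_add (le_vdist hg1m hg1W) (mul_le_mul_right (le_vdist hhm hhW) _)
          _ ≤ ENNReal.ofReal (V x ^ β) * vdist (fun y => V y ^ β) μ ν
              + ENNReal.ofReal (V x ^ β) * vdist (fun y => V y ^ β) μ ν :=
              add_le_add_left
                (le_mul_of_one_le_left' (ENNReal.one_le_ofReal.mpr (hW1 x))) _
          _ = 2 * vdist (fun y => V y ^ β) μ ν * ENNReal.ofReal (V x ^ β) := by ring
      · -- f not integrable w.r.t. P x : both integrals are junk 0
        have h0 : ∀ (ρ : Measure 𝒳), ¬ Integrable f (adaptK θ τ E P ρ x) := by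
          intro ρ hI
          unfold adaptK at hI
          rw [integrable_add_measure] at hI
          have h1 := hI.1
          rw [integrable_smul_measure hθ0 ENNReal.ofReal_ne_top] at h1
          exact hfP h1
        rw [integral_undef (h0 μ), integral_undef (h0 ν), sub_self, abs_zero,
          ENNReal.ofReal_zero]
        exact zero_le
    · -- integrable for μ, not for ν : vdist = ⊤
      have hvd : vdist (fun y => V y ^ β) μ ν = ⊤ := by
        rw [vdist_comm]
        exact vdist_eq_top hg1m hg1W ν μ hμI hνI
      have hRHS : 2 * vdist (fun y => V y ^ β) μ ν * ENNReal.ofReal (V x ^ β) = ⊤ := by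
        rw [hvd, ENNReal.mul_top (by norm_num), ENNReal.top_mul]
        simp only [ne_eq, ENNReal.ofReal_eq_zero, not_le]
        exact hWx0
      rw [hRHS]
      exact le_top
  · by_cases hνI : Integrable (fun y => accept τ E y x * f y) ν
    · -- integrable for ν, not for μ : vdist = ⊤
      have hvd : vdist (fun y => V y ^ β) μ ν = ⊤ :=
        vdist_eq_top hg1m hg1W μ ν hνI hμI
      have hRHS : 2 * vdist (fun y => V y ^ β) μ ν * ENNReal.ofReal (V x ^ β) = ⊤ := by
        rw [hvd, ENNReal.mul_top (by norm_num), ENNReal.top_mul]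
        simp only [ne_eq, ENNReal.ofReal_eq_zero, not_le]
        exact hWx0
      rw [hRHS]
      exact le_top
    · -- not integrable for either : both integrals are junk 0
      have h0 : ∀ (ρ : Measure 𝒳) [IsProbabilityMeasure ρ],
          ¬ Integrable (fun y => accept τ E y x * f y) ρ →
          ¬ Integrable f (adaptK θ τ E P ρ x) := by
        intro ρ _ hρ hI
        unfold adaptK at hI
        rw [integrable_add_measure] at hI
        have h2 := hI.2
        rw [integrable_smul_measure h1mθ ENNReal.ofReal_ne_top] at h2
        exact hρ ((integrable_bind_swapK_iff τ hE hfm x ρ).mp h2)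
      rw [integral_undef (h0 μ hμI), integral_undef (h0 ν hνI), sub_self, abs_zero,
        ENNReal.ofReal_zero]
      exact zero_le

end
end

section
/- Lipschitz continuity of the covariance function (Lemma 4.10). Under the compact setting, Assumption (A1'), the Lipschitz condition on the Poisson solution, and with E Lipschitz and f : X → ℝ Lipschitz with π(f) = 0, there exists a finite constant c₀ such that |Γ(x₁, x) − Γ(x, x)| ≤ c₀ |x₁ − x| for all x, x₁ ∈ X (|·| the Euclidean norm on ℝ^d). -/
open MeasureTheory Filter
open scoped ENNReal NNReal

noncomputable section

variable {𝒳 : Type*} [MeasurableSpace 𝒳]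

/-- Iterates of a kernel. -/
def iterK (P : 𝒳 → Measure 𝒳) : ℕ → 𝒳 → Measure 𝒳
  | 0 => fun x => Measure.dirac x
  | n + 1 => fun x => (iterK P n x).bind P

/-- Empirical measure of the auxiliary process. -/
def empMeas {Ω : Type*} (Xp : ℕ → Ω → 𝒳) (μ0 : Measure 𝒳) (n : ℕ) (ω : Ω) : Measure 𝒳 :=
  if n = 0 then μ0 else ((n : ℝ≥0∞))⁻¹ • ∑ k ∈ Finset.Icc 1 n, Measure.dirac (Xp k ω)


section Aux

variable {α : Type*} [MeasurableSpace α] {β : Type*} [MeasurableSpace β]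

lemma aux_integrable_of_bdd {μ : Measure α} [IsFiniteMeasure μ] {g : α → ℝ} (hg : Measurable g)
    {M : ℝ} (hM : ∀ x, |g x| ≤ M) : Integrable g μ :=
  ⟨hg.aestronglyMeasurable, HasFiniteIntegral.of_bounded (C := M)
    (Filter.Eventually.of_forall fun x => by simpa [Real.norm_eq_abs] using hM x)⟩

lemma aux_isProb_bind (μ : Measure α) [IsProbabilityMeasure μ]
    {κ : α → Measure β} (hκ : Measurable κ) (hκp : ∀ x, IsProbabilityMeasure (κ x)) :
    IsProbabilityMeasure (μ.bind κ) := by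
  constructor
  rw [Measure.bind_apply MeasurableSet.univ hκ.aemeasurable]
  have : ∀ a, κ a Set.univ = 1 := fun a => (hκp a).measure_univ
  simp [this]

lemma aux_abs_integral_le {μ : Measure α} [IsProbabilityMeasure μ] {g : α → ℝ}
    (hint : Integrable g μ) {M : ℝ} (hM : ∀ x, |g x| ≤ M) : |∫ x, g x ∂μ| ≤ M := by
  have := norm_integral_le_of_norm_le_const (μ := μ) (f := g) (C := M)
    (Filter.Eventually.of_forall fun x => by simpa [Real.norm_eq_abs] using hM x)
  simpa [Real.norm_eq_abs] using this

lemma aux_measurable_integral {κ : α → Measure β} (hκ : Measurable κ)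
    (hκp : ∀ x, IsProbabilityMeasure (κ x)) {g : β → ℝ} (hg : Measurable g)
    {M : ℝ} (hM : ∀ z, |g z| ≤ M) : Measurable (fun y => ∫ z, g z ∂(κ y)) := by
  have h1 : ∀ y, ∫ z, g z ∂(κ y)
      = (∫⁻ z, ENNReal.ofReal (g z) ∂(κ y)).toReal
        - (∫⁻ z, ENNReal.ofReal (-g z) ∂(κ y)).toReal := by
    intro y
    haveI := hκp y
    exact integral_eq_lintegral_pos_part_sub_lintegral_neg_part (aux_integrable_of_bdd hg hM)
  simp only [h1]
  exact ((Measure.measurable_lintegral hg.ennreal_ofReal).comp hκ).ennreal_toReal.sub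
    ((Measure.measurable_lintegral hg.neg.ennreal_ofReal).comp hκ).ennreal_toReal

lemma aux_integral_bind (μ : Measure α) [IsProbabilityMeasure μ] {κ : α → Measure β}
    (hκ : Measurable κ) (hκp : ∀ x, IsProbabilityMeasure (κ x)) {g : β → ℝ} (hg : Measurable g)
    {M : ℝ} (hM : ∀ z, |g z| ≤ M) :
    ∫ z, g z ∂(μ.bind κ) = ∫ y, ∫ z, g z ∂(κ y) ∂μ := by
  haveI := aux_isProb_bind μ hκ hκp
  have hMnn : 0 ≤ M := by
    have hα : Nonempty α := by
      by_contra hne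
      rw [not_nonempty_iff] at hne
      have h0 : μ Set.univ = 0 := by simp [Set.eq_empty_of_isEmpty (Set.univ : Set α)]
      rw [measure_univ] at h0; exact one_ne_zero h0
    have hβ : Nonempty β := by
      by_contra hne
      rw [not_nonempty_iff] at hne
      obtain ⟨x⟩ := hα
      haveI := hκp x
      have h0 : κ x Set.univ = 0 := by simp [Set.eq_empty_of_isEmpty (Set.univ : Set β)]
      rw [measure_univ] at h0; exact one_ne_zero h0
    exact le_trans (abs_nonneg _) (hM (Classical.arbitrary β))
  set A : α → ℝ≥0∞ := fun y => ∫⁻ z, ENNReal.ofReal (g z) ∂(κ y) with hA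
  set B : α → ℝ≥0∞ := fun y => ∫⁻ z, ENNReal.ofReal (-g z) ∂(κ y) with hB
  have hAmeas : Measurable A := (Measure.measurable_lintegral hg.ennreal_ofReal).comp hκ
  have hBmeas : Measurable B := (Measure.measurable_lintegral hg.neg.ennreal_ofReal).comp hκ
  have hAbd : ∀ y, A y ≤ ENNReal.ofReal M := by
    intro y
    haveI := hκp y
    calc A y ≤ ∫⁻ _, ENNReal.ofReal M ∂(κ y) :=
          lintegral_mono fun z => ENNReal.ofReal_le_ofReal ((abs_le.mp (hM z)).2)
      _ = ENNReal.ofReal M := by simp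
  have hBbd : ∀ y, B y ≤ ENNReal.ofReal M := by
    intro y
    haveI := hκp y
    calc B y ≤ ∫⁻ _, ENNReal.ofReal M ∂(κ y) :=
          lintegral_mono fun z => ENNReal.ofReal_le_ofReal (by
            have := (abs_le.mp (hM z)).1; linarith)
      _ = ENNReal.ofReal M := by simp
  have hAlt : ∀ y, A y < ∞ := fun y => lt_of_le_of_lt (hAbd y) ENNReal.ofReal_lt_top
  have hBlt : ∀ y, B y < ∞ := fun y => lt_of_le_of_lt (hBbd y) ENNReal.ofReal_lt_top
  have hpt : ∀ y, ∫ z, g z ∂(κ y) = (A y).toReal - (B y).toReal := by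
    intro y
    haveI := hκp y
    exact integral_eq_lintegral_pos_part_sub_lintegral_neg_part (aux_integrable_of_bdd hg hM)
  have hAint : Integrable (fun y => (A y).toReal) μ :=
    aux_integrable_of_bdd hAmeas.ennreal_toReal (M := M) (fun y => by
      rw [abs_of_nonneg ENNReal.toReal_nonneg]
      exact le_trans (ENNReal.toReal_mono ENNReal.ofReal_ne_top (hAbd y))
        (ENNReal.toReal_ofReal hMnn).le)
  have hBint : Integrable (fun y => (B y).toReal) μ :=
    aux_integrable_of_bdd hBmeas.ennreal_toReal (M := M) (fun y => by
      rw [abs_of_nonneg ENNReal.toReal_nonneg]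
      exact le_trans (ENNReal.toReal_mono ENNReal.ofReal_ne_top (hBbd y))
        (ENNReal.toReal_ofReal hMnn).le)
  calc ∫ z, g z ∂(μ.bind κ)
      = (∫⁻ z, ENNReal.ofReal (g z) ∂(μ.bind κ)).toReal
        - (∫⁻ z, ENNReal.ofReal (-g z) ∂(μ.bind κ)).toReal :=
        integral_eq_lintegral_pos_part_sub_lintegral_neg_part (aux_integrable_of_bdd hg hM)
    _ = (∫⁻ y, A y ∂μ).toReal - (∫⁻ y, B y ∂μ).toReal := by
        rw [Measure.lintegral_bind hκ.aemeasurable hg.ennreal_ofReal.aemeasurable, Measure.lintegral_bind (f := fun z => ENNReal.ofReal (-g z)) hκ.aemeasurable hg.neg.ennreal_ofReal.aemeasurable]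
    _ = ∫ y, (A y).toReal ∂μ - ∫ y, (B y).toReal ∂μ := by
        rw [integral_toReal hAmeas.aemeasurable (Filter.Eventually.of_forall hAlt),
          integral_toReal hBmeas.aemeasurable (Filter.Eventually.of_forall hBlt)]
    _ = ∫ y, ((A y).toReal - (B y).toReal) ∂μ := (integral_sub hAint hBint).symm
    _ = ∫ y, ∫ z, g z ∂(κ y) ∂μ := by
        congr 1; funext y; rw [hpt y]

lemma aux_measurable_iterK {P : α → Measure α} (hP : Measurable P) (n : ℕ) :
    Measurable (iterK P n) := by
  induction n with
  | zero => exact Measure.measurable_dirac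
  | succ n ih => exact (Measure.measurable_bind' hP).comp ih

lemma aux_isProb_iterK {P : α → Measure α} (hP : Measurable P)
    (hPp : ∀ x, IsProbabilityMeasure (P x)) (n : ℕ) (x : α) :
    IsProbabilityMeasure (iterK P n x) := by
  induction n with
  | zero => exact Measure.dirac.isProbabilityMeasure
  | succ n ih => exact @aux_isProb_bind _ _ _ _ _ ih _ hP hPp

lemma aux_iterK_add {P : α → Measure α} (hP : Measurable P) (m n : ℕ) (x : α) :
    iterK P (m + n) x = (iterK P m x).bind (iterK P n) := by
  induction n with
  | zero => exact Measure.bind_dirac.symm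
  | succ n ih =>
      show (iterK P (m + n) x).bind P = _
      rw [ih, Measure.bind_bind (aux_measurable_iterK hP n).aemeasurable hP.aemeasurable]
      rfl

lemma aux_invariant_iterK {P : α → Measure α} (hP : Measurable P) {π : Measure α}
    (hinv : π.bind P = π) (n : ℕ) : π.bind (iterK P n) = π := by
  induction n with
  | zero => exact Measure.bind_dirac
  | succ n ih =>
      have h : π.bind (iterK P (n + 1)) = (π.bind (iterK P n)).bind P := by
        rw [Measure.bind_bind (aux_measurable_iterK hP n).aemeasurable hP.aemeasurable]; rfl
      rw [h, ih, hinv]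

end Aux

section Aux2
variable {α : Type*} [MeasurableSpace α]

lemma aux_doeblin [Nonempty α] {P : α → Measure α} (hP : Measurable P)
    (hPprob : ∀ x, IsProbabilityMeasure (P x))
    {π : Measure α} [IsProbabilityMeasure π] (hinv : π.bind P = π)
    {n₀ : ℕ} (hn₀ : 1 ≤ n₀) {ε : ℝ} (hε0 : 0 < ε) (hε1 : ε ≤ 1)
    {φ : Measure α} [IsProbabilityMeasure φ]
    (hmin : ∀ x, ∀ A : Set α, MeasurableSet A → ENNReal.ofReal ε * φ A ≤ iterK P n₀ x A)
    {g : α → ℝ} (hg : Measurable g) {M : ℝ} (hM : ∀ x, |g x| ≤ M)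
    (hmean : ∫ x, g x ∂π = 0) :
    ∀ j y, |∫ z, g z ∂(iterK P j y)| ≤ 2 * M * (1 - ε) ^ (j / n₀) := by
  have hM0 : 0 ≤ M := le_trans (abs_nonneg _) (hM (Classical.arbitrary α))
  have hiterprob : ∀ n x, IsProbabilityMeasure (iterK P n x) := fun n x =>
    aux_isProb_iterK hP hPprob n x
  have hitermeas : ∀ n, Measurable (iterK P n) := aux_measurable_iterK hP
  -- F j y
  set F : ℕ → α → ℝ := fun j y => ∫ z, g z ∂(iterK P j y) with hF
  have hFmeas : ∀ j, Measurable (F j) := fun j =>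
    aux_measurable_integral (hitermeas j) (hiterprob j) hg hM
  have hFbd : ∀ j y, |F j y| ≤ M := by
    intro j y
    haveI := hiterprob j y
    exact aux_abs_integral_le (aux_integrable_of_bdd hg hM) hM
  -- the Doeblin contraction step
  have hεlt : ENNReal.ofReal ε ≠ ∞ := ENNReal.ofReal_ne_top
  haveI hfinsmul : IsFiniteMeasure (ENNReal.ofReal ε • φ) := by
    constructor
    rw [Measure.smul_apply, smul_eq_mul, measure_univ, mul_one]
    exact ENNReal.ofReal_lt_top
  have hle : ∀ y, (ENNReal.ofReal ε) • φ ≤ iterK P n₀ y := by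
    intro y
    rw [Measure.le_iff]
    intro s hs
    simpa [Measure.smul_apply, smul_eq_mul] using hmin y s hs
  have hstep : ∀ (h : α → ℝ), Measurable h → ∀ B : ℝ, (∀ z, |h z| ≤ B) → ∀ c : ℝ, 0 ≤ c →
      (∀ z z', h z - h z' ≤ c) → ∀ y y',
      (∫ z, h z ∂(iterK P n₀ y)) - (∫ z, h z ∂(iterK P n₀ y')) ≤ (1 - ε) * c := by
    intro h hh B hB c hc hosc y y'
    set ν : α → Measure α := fun y => iterK P n₀ y - (ENNReal.ofReal ε) • φ with hν
    have hdec : ∀ y, ν y + (ENNReal.ofReal ε) • φ = iterK P n₀ y := fun y =>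
      Measure.sub_add_cancel_of_le (hle y)
    haveI hνfin : ∀ y, IsFiniteMeasure (ν y) := by
      intro y
      constructor
      haveI := hiterprob n₀ y
      calc (ν y) Set.univ ≤ (iterK P n₀ y) Set.univ := Measure.le_iff'.mp Measure.sub_le _
        _ < ∞ := measure_lt_top _ _
    have hmass : ∀ y, ((ν y) Set.univ).toReal = 1 - ε := by
      intro y
      haveI := hiterprob n₀ y
      rw [hν, Measure.sub_apply MeasurableSet.univ (hle y), measure_univ,
        Measure.smul_apply, smul_eq_mul, measure_univ, mul_one]
      rw [show (1 : ℝ≥0∞) = ENNReal.ofReal 1 from (ENNReal.ofReal_one).symm,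
        ← ENNReal.ofReal_sub _ hε0.le, ENNReal.toReal_ofReal (by linarith)]
    -- sup and inf
    set s : ℝ := ⨆ z, h z with hs
    set i : ℝ := ⨅ z, h z with hi
    have hbdda : BddAbove (Set.range h) := ⟨B, by rintro _ ⟨z, rfl⟩; exact (abs_le.mp (hB z)).2⟩
    have hbddb : BddBelow (Set.range h) := ⟨-B, by rintro _ ⟨z, rfl⟩; exact (abs_le.mp (hB z)).1⟩
    have hle_s : ∀ z, h z ≤ s := fun z => le_ciSup hbdda z
    have hi_le : ∀ z, i ≤ h z := fun z => ciInf_le hbddb z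
    have hsi : s - i ≤ c := by
      have h1 : s ≤ c + i := by
        apply ciSup_le
        intro z
        have h2 : h z - c ≤ i := le_ciInf fun z' => by linarith [hosc z z']
        linarith
      linarith
    -- integral identity
    have hint : ∀ y, Integrable h (ν y) := fun y => aux_integrable_of_bdd hh hB
    have hintφ : Integrable h ((ENNReal.ofReal ε) • φ) := aux_integrable_of_bdd hh hB
    have hid : ∀ y, ∫ z, h z ∂(iterK P n₀ y)
        = ∫ z, h z ∂(ν y) + ∫ z, h z ∂((ENNReal.ofReal ε) • φ) := by
      intro y
      rw [← hdec y, integral_add_measure (hint y) hintφ]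
    have hup : ∫ z, h z ∂(ν y) ≤ (1 - ε) * s := by
      calc ∫ z, h z ∂(ν y) ≤ ∫ _, s ∂(ν y) := integral_mono (hint y) (integrable_const s) hle_s
        _ = ((ν y) Set.univ).toReal • s := integral_const s
        _ = (1 - ε) * s := by rw [hmass y, smul_eq_mul]
    have hdown : (1 - ε) * i ≤ ∫ z, h z ∂(ν y') := by
      calc (1 - ε) * i = ((ν y') Set.univ).toReal • i := by rw [hmass y', smul_eq_mul]
        _ = ∫ _, i ∂(ν y') := (integral_const i).symm
        _ ≤ ∫ z, h z ∂(ν y') := integral_mono (integrable_const i) (hint y') hi_le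
    have hεnn : (0:ℝ) ≤ 1 - ε := by linarith
    calc (∫ z, h z ∂(iterK P n₀ y)) - (∫ z, h z ∂(iterK P n₀ y'))
        = (∫ z, h z ∂(ν y)) - (∫ z, h z ∂(ν y')) := by rw [hid y, hid y']; ring
      _ ≤ (1 - ε) * s - (1 - ε) * i := by linarith
      _ = (1 - ε) * (s - i) := by ring
      _ ≤ (1 - ε) * c := mul_le_mul_of_nonneg_left hsi hεnn
  -- oscillation bound by strong induction
  have hosc : ∀ j, ∀ y y', F j y - F j y' ≤ 2 * M * (1 - ε) ^ (j / n₀) := by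
    intro j
    induction j using Nat.strong_induction_on with
    | _ j ih =>
      by_cases hj : j < n₀
      · intro y y'
        rw [Nat.div_eq_of_lt hj, pow_zero, mul_one]
        have h1 := abs_le.mp (hFbd j y)
        have h2 := abs_le.mp (hFbd j y')
        linarith
      · push_neg at hj
        set j' := j - n₀ with hj'
        have hjj : j' < j := by omega
        have hsum : n₀ + j' = j := by omega
        have hrw : ∀ y, F j y = ∫ z, F j' z ∂(iterK P n₀ y) := by
          intro y
          haveI := hiterprob n₀ y
          rw [hF]
          simp only
          rw [← hsum, aux_iterK_add hP n₀ j' y,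
            aux_integral_bind _ (hitermeas j') (hiterprob j') hg hM]
        intro y y'
        rw [hrw y, hrw y']
        have hc : (0:ℝ) ≤ 2 * M * (1 - ε) ^ (j' / n₀) := by
          have := pow_nonneg (by linarith : (0:ℝ) ≤ 1 - ε) (j' / n₀)
          nlinarith
        have := hstep (F j') (hFmeas j') M (hFbd j') _ hc (ih j' hjj) y y'
        calc (∫ z, F j' z ∂(iterK P n₀ y)) - (∫ z, F j' z ∂(iterK P n₀ y'))
            ≤ (1 - ε) * (2 * M * (1 - ε) ^ (j' / n₀)) := this
          _ = 2 * M * (1 - ε) ^ (j' / n₀ + 1) := by ring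
          _ = 2 * M * (1 - ε) ^ (j / n₀) := by
              congr 1
              rw [← hsum, Nat.add_div_left j' (by omega)]
  -- mean-zero final bound
  have hFmean : ∀ j, ∫ y, F j y ∂π = 0 := by
    intro j
    rw [hF]
    simp only
    rw [← aux_integral_bind π (hitermeas j) (hiterprob j) hg hM,
      aux_invariant_iterK hP hinv j, hmean]
  intro j y
  have hFint : Integrable (F j) π := aux_integrable_of_bdd (hFmeas j) (hFbd j)
  have hkey : F j y = ∫ w, (F j y - F j w) ∂π := by
    rw [integral_sub (integrable_const _) hFint, hFmean j, integral_const, probReal_univ,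
      one_smul, sub_zero]
  have hint2 : Integrable (fun w => F j y - F j w) π := (integrable_const _).sub hFint
  rw [show |∫ z, g z ∂(iterK P j y)| = |F j y| from rfl, hkey]
  exact aux_abs_integral_le hint2
    (fun w => abs_le.mpr ⟨by linarith [hosc j w y], hosc j y w⟩)

end Aux2

section Aux3
variable {α : Type*} [MeasurableSpace α]

lemma aux_summable_pow_div {ρ : ℝ} (h0 : 0 < ρ) (h1 : ρ < 1) {n₀ : ℕ} (hn₀ : 1 ≤ n₀) :
    Summable (fun j : ℕ => ρ ^ (j / n₀)) := by
  set σ := ρ ^ ((n₀ : ℝ)⁻¹) with hσ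
  have hσ0 : 0 < σ := Real.rpow_pos_of_pos h0 _
  have hσ1 : σ < 1 := Real.rpow_lt_one h0.le h1 (by positivity)
  have hσn : σ ^ n₀ = ρ := Real.rpow_inv_natCast_pow h0.le (by omega)
  apply Summable.of_nonneg_of_le (f := fun j => ρ⁻¹ * σ ^ j) (fun j => by positivity)
  · intro j
    have hexp : j ≤ n₀ * (j / n₀) + n₀ := by
      have h2 := Nat.div_add_mod j n₀
      have h3 := Nat.mod_lt j (show 0 < n₀ by omega)
      omega
    have h2 : σ ^ (n₀ * (j / n₀) + n₀) ≤ σ ^ j :=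
      pow_le_pow_of_le_one hσ0.le hσ1.le hexp
    have h3 : ρ ^ (j / n₀) = σ ^ (n₀ * (j / n₀)) := by rw [pow_mul, hσn]
    have h4 : σ ^ (n₀ * (j / n₀)) * ρ ≤ σ ^ j := by
      rw [← hσn, ← pow_add]; exact h2
    rw [h3]
    rw [inv_mul_eq_div, le_div_iff₀ h0]
    exact h4
  · exact (summable_geometric_of_lt_one hσ0.le hσ1).mul_left _

lemma aux_exp_lip {C a b : ℝ} (ha : a ≤ C) (hb : b ≤ C) :
    |Real.exp a - Real.exp b| ≤ Real.exp C * |a - b| := by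
  wlog hab : b ≤ a generalizing a b
  · rw [abs_sub_comm, abs_sub_comm a b]; exact this hb ha (by linarith)
  have hmul : Real.exp (b - a) * Real.exp a = Real.exp b := by
    rw [← Real.exp_add]; ring_nf
  have h1 : Real.exp a ≤ Real.exp C := Real.exp_le_exp.mpr ha
  have h2 : Real.exp b ≤ Real.exp a := Real.exp_le_exp.mpr hab
  rw [abs_of_nonneg (by linarith), abs_of_nonneg (by linarith)]
  nlinarith [Real.add_one_le_exp (b - a), Real.exp_pos a]

lemma aux_min_one_lip (a b : ℝ) : |min 1 a - min 1 b| ≤ |a - b| := by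
  have key : ∀ p q : ℝ, p ≤ q → min 1 q - min 1 p ≤ q - p := by
    intro p q h
    rcases le_total q 1 with h1 | h1
    · rw [min_eq_right h1, min_eq_right (le_trans h h1)]
    · rcases le_total p 1 with h2 | h2
      · rw [min_eq_left h1, min_eq_right h2]; linarith
      · rw [min_eq_left h1, min_eq_left h2]; linarith
  rcases le_total a b with hab | hab
  · rw [abs_sub_comm, abs_of_nonneg (sub_nonneg.mpr (min_le_min le_rfl hab)),
      abs_sub_comm, abs_of_nonneg (sub_nonneg.mpr hab)]
    exact key a b hab
  · rw [abs_of_nonneg (sub_nonneg.mpr (min_le_min le_rfl hab)),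
      abs_of_nonneg (sub_nonneg.mpr hab)]
    exact key b a hab

lemma aux_accept_nonneg (τ : ℝ) (E : α → ℝ) (y x : α) : 0 ≤ accept τ E y x :=
  le_min zero_le_one (by positivity)

lemma aux_accept_le_one (τ : ℝ) (E : α → ℝ) (y x : α) : accept τ E y x ≤ 1 :=
  min_le_left _ _

lemma aux_integral_swapK [MeasurableSingletonClass α] {g : α → ℝ} (hg : Measurable g)
    {M : ℝ} (hM : ∀ z, |g z| ≤ M) (τ : ℝ) (E : α → ℝ) (y x : α) :
    ∫ z, g z ∂(swapK τ E y x)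
      = accept τ E y x * g y + (1 - accept τ E y x) * g x := by
  have h0 := aux_accept_nonneg τ E y x
  have h1 := aux_accept_le_one τ E y x
  haveI f1 : IsFiniteMeasure (ENNReal.ofReal (accept τ E y x) • (Measure.dirac y : Measure α)) := by
    constructor
    rw [Measure.smul_apply, smul_eq_mul, measure_univ, mul_one]
    exact ENNReal.ofReal_lt_top
  haveI f2 : IsFiniteMeasure
      (ENNReal.ofReal (1 - accept τ E y x) • (Measure.dirac x : Measure α)) := by
    constructor
    rw [Measure.smul_apply, smul_eq_mul, measure_univ, mul_one]
    exact ENNReal.ofReal_lt_top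
  have i1 : Integrable g (ENNReal.ofReal (accept τ E y x) • (Measure.dirac y : Measure α)) :=
    aux_integrable_of_bdd hg hM
  have i2 : Integrable g
      (ENNReal.ofReal (1 - accept τ E y x) • (Measure.dirac x : Measure α)) :=
    aux_integrable_of_bdd hg hM
  rw [swapK, integral_add_measure i1 i2, integral_smul_measure, integral_smul_measure,
    integral_dirac, integral_dirac, ENNReal.toReal_ofReal h0,
    ENNReal.toReal_ofReal (by linarith)]
  simp [smul_eq_mul]

end Aux3


set_option maxHeartbeats 1000000 in
/-- **Lipschitz continuity of the covariance function** (Lemma 4.10). In the compact setting,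
under (A1'), the Lipschitz condition on the Poisson solution, with `E` Lipschitz and `f`
Lipschitz with `π(f) = 0`, there is `c₀ < ∞` with `|Γ(x₁, x) − Γ(x, x)| ≤ c₀|x₁ − x|`. -/
theorem covariance_function_lipschitz
    {d : ℕ} (S : Set (EuclideanSpace ℝ (Fin d))) (hS : IsCompact S) (hSne : S.Nonempty)
    (lam : Measure S) [SigmaFinite lam]
    (E : ↥S → ℝ) (LE : ℝ≥0) (hELip : LipschitzWith LE E)
    (t t' τ : ℝ) (ht : 0 < t) (htt' : t < t') (hτ : τ = 1 / t - 1 / t')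
    (π π' : Measure S) [IsProbabilityMeasure π] [IsProbabilityMeasure π']
    (hπ : π = lam.withDensity fun x =>
      ENNReal.ofReal (Real.exp (-E x / t)) / ∫⁻ y, ENNReal.ofReal (Real.exp (-E y / t)) ∂lam)
    (hπ' : π' = lam.withDensity fun x =>
      ENNReal.ofReal (Real.exp (-E x / t')) / ∫⁻ y, ENNReal.ofReal (Real.exp (-E y / t')) ∂lam)
    (P0 P : ↥S → Measure S)
    (hP0meas : Measurable P0) (hPmeas : Measurable P)
    (hP0prob : ∀ x, IsProbabilityMeasure (P0 x)) (hPprob : ∀ x, IsProbabilityMeasure (P x))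
    (hP0inv : π'.bind P0 = π') (hPinv : π.bind P = π)
    (θ : ℝ) (hθ : θ ∈ Set.Ioo (0 : ℝ) 1)
    (n₀ : ℕ) (hn₀ : 1 ≤ n₀)
    (ε₀ ε₁ : ℝ) (hε₀ : ε₀ ∈ Set.Ioc (0 : ℝ) 1) (hε₁ : ε₁ ∈ Set.Ioc (0 : ℝ) 1)
    (φ₀ φ₁ : Measure S) [IsProbabilityMeasure φ₀] [IsProbabilityMeasure φ₁]
    (hmino0 : ∀ x, ∀ A : Set ↥S, MeasurableSet A → ENNReal.ofReal ε₀ * φ₀ A ≤ iterK P0 n₀ x A)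
    (hmino1 : ∀ x, ∀ A : Set ↥S, MeasurableSet A → ENNReal.ofReal ε₁ * φ₁ A ≤ iterK P n₀ x A)
    (hPoisson : ∀ g : ↥S → ℝ, (∃ L : ℝ≥0, LipschitzWith L g) → (∫ x, g x ∂π = 0) →
      ∃ L' : ℝ≥0, LipschitzWith L'
        (fun x => ∑' j : ℕ, ∫ z, g z ∂(iterK (adaptK θ τ E P π') j x)))
    (f : ↥S → ℝ) (Lf : ℝ≥0) (hfLip : LipschitzWith Lf f) (hfπ : ∫ x, f x ∂π = 0) :
    let U : ↥S → ℝ := fun x => ∑' j : ℕ, ∫ z, f z ∂(iterK (adaptK θ τ E P π') j x)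
    let H : ↥S → ↥S → ℝ := fun x y =>
      (∫ z, U z ∂(swapK τ E y x)) - ∫ y', ∫ z, U z ∂(swapK τ E y' x) ∂π'
    let U0 : ↥S → ↥S → ℝ := fun x y => ∑' j : ℕ, ∫ z, H x z ∂(iterK P0 j y)
    let Γcov : ↥S → ↥S → ℝ := fun x y =>
      ∫ z, (U0 x z * U0 y z - (∫ w, U0 x w ∂(P0 z)) * (∫ w, U0 y w ∂(P0 z))) ∂π'
    ∃ c₀ : ℝ, ∀ x x₁ : ↥S,
      |Γcov x₁ x - Γcov x x| ≤ c₀ * ‖(↑x₁ - ↑x : EuclideanSpace ℝ (Fin d))‖ := by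
  intro U H U0 Γcov
  haveI hcs : CompactSpace ↥S := isCompact_iff_compactSpace.mp hS
  haveI hne : Nonempty ↥S := hSne.to_subtype
  have tri : ∀ u v : ℝ, |u - v| ≤ |u| + |v| := fun u v => abs_sub u v
  -- U is Lipschitz hence continuous, measurable, bounded
  obtain ⟨LU, hULip⟩ := hPoisson f ⟨Lf, hfLip⟩ hfπ
  have hUcont : Continuous U := hULip.continuous
  have hUmeas : Measurable U := hUcont.measurable
  obtain ⟨MU, hMU⟩ : ∃ C, ∀ z : ↥S, |U z| ≤ C := by
    obtain ⟨C, hC⟩ := isCompact_univ.exists_bound_of_continuousOn hUcont.continuousOn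
    exact ⟨C, fun z => by simpa [Real.norm_eq_abs] using hC z trivial⟩
  have hMU0 : 0 ≤ MU := le_trans (abs_nonneg _) (hMU (Classical.arbitrary _))
  have hEcont : Continuous E := hELip.continuous
  obtain ⟨CE, hCE⟩ : ∃ C, ∀ z : ↥S, |E z| ≤ C := by
    obtain ⟨C, hC⟩ := isCompact_univ.exists_bound_of_continuousOn hEcont.continuousOn
    exact ⟨C, fun z => by simpa [Real.norm_eq_abs] using hC z trivial⟩
  have hdist : ∀ x₁ x : ↥S, dist x₁ x
      = ‖((x₁ : EuclideanSpace ℝ (Fin d)) - (x : EuclideanSpace ℝ (Fin d)))‖ := fun x₁ x => by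
    rw [Subtype.dist_eq, dist_eq_norm]
  -- Lipschitz continuity of the acceptance probability in `x`
  set Ca : ℝ := Real.exp (2 * |τ| * CE) * (|τ| * (LE : ℝ)) with hCa
  have hCa0 : 0 ≤ Ca := by positivity
  have hacc_lip : ∀ (y x₁ x : ↥S), |accept τ E y x₁ - accept τ E y x| ≤ Ca * dist x₁ x := by
    intro y x₁ x
    have key : ∀ x' : ↥S, accept τ E y x' = min 1 (Real.exp (-τ * E y + τ * E x')) := by
      intro x'
      rw [accept, ← Real.exp_sub]
      congr 2
      ring
    rw [key, key]
    have hbd : ∀ x' : ↥S, -τ * E y + τ * E x' ≤ 2 * |τ| * CE := by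
      intro x'
      have h1 : -τ * E y ≤ |τ| * CE := by
        calc -τ * E y ≤ |(-τ) * E y| := le_abs_self _
          _ = |τ| * |E y| := by rw [abs_mul, abs_neg]
          _ ≤ |τ| * CE := mul_le_mul_of_nonneg_left (hCE y) (abs_nonneg τ)
      have h2 : τ * E x' ≤ |τ| * CE := by
        calc τ * E x' ≤ |τ * E x'| := le_abs_self _
          _ = |τ| * |E x'| := abs_mul _ _
          _ ≤ |τ| * CE := mul_le_mul_of_nonneg_left (hCE x') (abs_nonneg τ)
      linarith
    have hd : |E x₁ - E x| ≤ (LE : ℝ) * dist x₁ x := by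
      have := hELip.dist_le_mul x₁ x
      rwa [Real.dist_eq] at this
    calc |min 1 (Real.exp (-τ * E y + τ * E x₁)) - min 1 (Real.exp (-τ * E y + τ * E x))|
        ≤ |Real.exp (-τ * E y + τ * E x₁) - Real.exp (-τ * E y + τ * E x)| :=
          aux_min_one_lip _ _
      _ ≤ Real.exp (2 * |τ| * CE) * |(-τ * E y + τ * E x₁) - (-τ * E y + τ * E x)| :=
          aux_exp_lip (hbd x₁) (hbd x)
      _ = Real.exp (2 * |τ| * CE) * (|τ| * |E x₁ - E x|) := by
          rw [show (-τ * E y + τ * E x₁) - (-τ * E y + τ * E x) = τ * (E x₁ - E x) by ring,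
            abs_mul]
      _ ≤ Real.exp (2 * |τ| * CE) * (|τ| * ((LE : ℝ) * dist x₁ x)) := by
          apply mul_le_mul_of_nonneg_left _ (Real.exp_pos _).le
          exact mul_le_mul_of_nonneg_left hd (abs_nonneg τ)
      _ = Ca * dist x₁ x := by rw [hCa]; ring
  -- the function G x y = ∫ U d(T(y,x,·))
  set G : ↥S → ↥S → ℝ := fun x y => accept τ E y x * U y + (1 - accept τ E y x) * U x with hG
  have hGdef : ∀ x y, ∫ z, U z ∂(swapK τ E y x) = G x y := fun x y =>
    aux_integral_swapK hUmeas hMU τ E y x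
  have haccmeas : ∀ x : ↥S, Measurable fun y : ↥S => accept τ E y x := by
    intro x
    have h0 : Continuous fun y : ↥S => -τ * E y := continuous_const.mul hEcont
    have h1 : Continuous fun y : ↥S => Real.exp (-τ * E y) / Real.exp (-τ * E x) :=
      (Real.continuous_exp.comp h0).div_const _
    exact (continuous_const.min h1).measurable
  have hGbd : ∀ x y, |G x y| ≤ MU := by
    intro x y
    have h0 := aux_accept_nonneg τ E y x
    have h1 := aux_accept_le_one τ E y x
    have hy := abs_le.mp (hMU y)
    have hx := abs_le.mp (hMU x)
    rw [hG]
    simp only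
    rw [abs_le]
    constructor <;> nlinarith
  have hGmeas : ∀ x, Measurable (G x) := fun x =>
    ((haccmeas x).mul hUmeas).add ((measurable_const.sub (haccmeas x)).mul measurable_const)
  set CG : ℝ := 2 * MU * Ca + (LU : ℝ) with hCG
  have hCG0 : 0 ≤ CG := add_nonneg (mul_nonneg (by linarith) hCa0) LU.coe_nonneg
  have hGlip : ∀ (y x₁ x : ↥S), |G x₁ y - G x y| ≤ CG * dist x₁ x := by
    intro y x₁ x
    have hid : G x₁ y - G x y
        = (accept τ E y x₁ - accept τ E y x) * (U y - U x)
          + (1 - accept τ E y x₁) * (U x₁ - U x) := by rw [hG]; ring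
    have h0 := aux_accept_nonneg τ E y x₁
    have h1 := aux_accept_le_one τ E y x₁
    have hUd : |U x₁ - U x| ≤ (LU : ℝ) * dist x₁ x := by
      have := hULip.dist_le_mul x₁ x
      rwa [Real.dist_eq] at this
    have e1 : |(accept τ E y x₁ - accept τ E y x) * (U y - U x)| ≤ Ca * dist x₁ x * (2 * MU) := by
      rw [abs_mul]
      have hUyx : |U y - U x| ≤ 2 * MU := by
        have hy := abs_le.mp (hMU y)
        have hx := abs_le.mp (hMU x)
        cases abs_cases (U y - U x) <;> linarith
      exact mul_le_mul (hacc_lip y x₁ x) hUyx (abs_nonneg _) (mul_nonneg hCa0 dist_nonneg)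
    have e2 : |(1 - accept τ E y x₁) * (U x₁ - U x)| ≤ (LU : ℝ) * dist x₁ x := by
      rw [abs_mul, abs_of_nonneg (by linarith)]
      calc (1 - accept τ E y x₁) * |U x₁ - U x| ≤ 1 * |U x₁ - U x| :=
            mul_le_mul_of_nonneg_right (by linarith) (abs_nonneg _)
        _ = |U x₁ - U x| := one_mul _
        _ ≤ _ := hUd
    rw [hid]
    calc |(accept τ E y x₁ - accept τ E y x) * (U y - U x)
          + (1 - accept τ E y x₁) * (U x₁ - U x)|
        ≤ |(accept τ E y x₁ - accept τ E y x) * (U y - U x)|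
          + |(1 - accept τ E y x₁) * (U x₁ - U x)| := abs_add_le _ _
      _ ≤ Ca * dist x₁ x * (2 * MU) + (LU : ℝ) * dist x₁ x := add_le_add e1 e2
      _ = CG * dist x₁ x := by rw [hCG]; ring
  -- the function H
  have hHdef : ∀ x y, H x y = G x y - ∫ y', G x y' ∂π' := by
    intro x y
    show (∫ z, U z ∂(swapK τ E y x)) - (∫ y', ∫ z, U z ∂(swapK τ E y' x) ∂π') = _
    rw [hGdef]
    congr 1
    exact integral_congr_ae (Filter.Eventually.of_forall fun y' => hGdef x y')
  have hGint : ∀ x, Integrable (G x) π' := fun x => aux_integrable_of_bdd (hGmeas x) (hGbd x)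
  have hGintbd : ∀ x, |∫ y', G x y' ∂π'| ≤ MU := fun x => aux_abs_integral_le (hGint x) (hGbd x)
  have hHmeas : ∀ x, Measurable (H x) := by
    intro x
    have h : H x = fun y => G x y - ∫ y', G x y' ∂π' := funext (hHdef x)
    rw [h]
    exact (hGmeas x).sub measurable_const
  have hHbd : ∀ x y, |H x y| ≤ 2 * MU := by
    intro x y
    rw [hHdef]
    calc |G x y - ∫ y', G x y' ∂π'| ≤ |G x y| + |∫ y', G x y' ∂π'| := tri _ _
      _ ≤ 2 * MU := by linarith [hGbd x y, hGintbd x]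
  have hHmean : ∀ x, ∫ y, H x y ∂π' = 0 := by
    intro x
    have h : ∫ y, H x y ∂π' = ∫ y, (G x y - ∫ y', G x y' ∂π') ∂π' :=
      integral_congr_ae (Filter.Eventually.of_forall fun y => by rw [hHdef])
    rw [h, integral_sub (hGint x) (integrable_const _), integral_const, probReal_univ,
      one_smul, sub_self]
  have hHlip : ∀ (x₁ x y : ↥S), |H x₁ y - H x y| ≤ (2 * CG) * dist x₁ x := by
    intro x₁ x y
    rw [hHdef, hHdef]
    have hdint : |(∫ y', G x₁ y' ∂π') - ∫ y', G x y' ∂π'| ≤ CG * dist x₁ x := by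
      rw [← integral_sub (hGint x₁) (hGint x)]
      exact aux_abs_integral_le ((hGint x₁).sub (hGint x)) (fun y' => hGlip y' x₁ x)
    have h1 := hGlip y x₁ x
    have hid : (G x₁ y - ∫ y', G x₁ y' ∂π') - (G x y - ∫ y', G x y' ∂π')
        = (G x₁ y - G x y) - ((∫ y', G x₁ y' ∂π') - ∫ y', G x y' ∂π') := by ring
    rw [hid]
    calc |(G x₁ y - G x y) - ((∫ y', G x₁ y' ∂π') - ∫ y', G x y' ∂π')|
        ≤ |G x₁ y - G x y| + |(∫ y', G x₁ y' ∂π') - ∫ y', G x y' ∂π'| := tri _ _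
      _ ≤ (2 * CG) * dist x₁ x := by linarith
  -- geometric ergodicity of P0
  set ρ : ℝ := max (1 - ε₀) 2⁻¹ with hρ
  have hρ0 : (0:ℝ) < ρ := lt_max_of_lt_right (by norm_num)
  have hρ1 : ρ < 1 := max_lt (by linarith [hε₀.1]) (by norm_num)
  have hρsum : Summable (fun j : ℕ => ρ ^ (j / n₀)) := aux_summable_pow_div hρ0 hρ1 hn₀
  set Sρ : ℝ := ∑' j : ℕ, ρ ^ (j / n₀) with hSρ
  have hSρ0 : 0 ≤ Sρ := tsum_nonneg fun j => pow_nonneg hρ0.le _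
  have hDoeb : ∀ (g : ↥S → ℝ), Measurable g → ∀ M : ℝ, (∀ y, |g y| ≤ M) →
      (∫ y, g y ∂π' = 0) → ∀ (j : ℕ) (z : ↥S),
      |∫ w, g w ∂(iterK P0 j z)| ≤ 2 * M * ρ ^ (j / n₀) := by
    intro g hg M hM hmean j z
    have hM0 : 0 ≤ M := le_trans (abs_nonneg _) (hM z)
    have h1 := aux_doeblin hP0meas hP0prob hP0inv hn₀ hε₀.1 hε₀.2 hmino0 hg hM hmean j z
    have h2 : (1 - ε₀) ^ (j / n₀) ≤ ρ ^ (j / n₀) :=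
      pow_le_pow_left₀ (by linarith [hε₀.2]) (le_max_left _ _) _
    nlinarith
  have hiterP0prob : ∀ j z, IsProbabilityMeasure (iterK P0 j z) := fun j z =>
    aux_isProb_iterK hP0meas hP0prob j z
  have hFmeas : ∀ (x : ↥S) (j : ℕ), Measurable fun z => ∫ w, H x w ∂(iterK P0 j z) := fun x j =>
    aux_measurable_integral (aux_measurable_iterK hP0meas j) (hiterP0prob j) (hHmeas x) (hHbd x)
  have hFbd : ∀ x j z, |∫ w, H x w ∂(iterK P0 j z)| ≤ 2 * (2 * MU) * ρ ^ (j / n₀) := fun x =>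
    hDoeb (H x) (hHmeas x) (2 * MU) (hHbd x) (hHmean x)
  have hFsum : ∀ x z, Summable fun j : ℕ => ∫ w, H x w ∂(iterK P0 j z) := by
    intro x z
    apply Summable.of_abs
    exact Summable.of_nonneg_of_le (fun j => abs_nonneg _) (fun j => hFbd x j z)
      (hρsum.mul_left _)
  have hU0def : ∀ x z, U0 x z = ∑' j : ℕ, ∫ w, H x w ∂(iterK P0 j z) := fun x z => rfl
  set B0 : ℝ := 2 * (2 * MU) * Sρ with hB0
  have hB00 : 0 ≤ B0 := mul_nonneg (by linarith) hSρ0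
  have hU0bd : ∀ x z, |U0 x z| ≤ B0 := by
    intro x z
    rw [hU0def]
    have habs : Summable fun j : ℕ => |∫ w, H x w ∂(iterK P0 j z)| :=
      Summable.of_nonneg_of_le (fun j => abs_nonneg _) (fun j => hFbd x j z) (hρsum.mul_left _)
    calc |∑' j : ℕ, ∫ w, H x w ∂(iterK P0 j z)|
        ≤ ∑' j : ℕ, |∫ w, H x w ∂(iterK P0 j z)| := by
          simpa [Real.norm_eq_abs] using
            norm_tsum_le_tsum_norm (f := fun j : ℕ => ∫ w, H x w ∂(iterK P0 j z))
              (by simpa [Real.norm_eq_abs] using habs)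
      _ ≤ ∑' j : ℕ, 2 * (2 * MU) * ρ ^ (j / n₀) :=
          Summable.tsum_le_tsum (fun j => hFbd x j z) habs (hρsum.mul_left _)
      _ = B0 := by rw [tsum_mul_left]
  set CL : ℝ := 2 * (2 * CG) * Sρ with hCL
  have hCL0 : 0 ≤ CL := mul_nonneg (by linarith) hSρ0
  have hU0lip : ∀ x₁ x z, |U0 x₁ z - U0 x z| ≤ CL * dist x₁ x := by
    intro x₁ x z
    have hgmeas : Measurable fun w => H x₁ w - H x w := (hHmeas x₁).sub (hHmeas x)
    have hgbd : ∀ w, |H x₁ w - H x w| ≤ (2 * CG) * dist x₁ x := hHlip x₁ x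
    have hgmean : ∫ w, (H x₁ w - H x w) ∂π' = 0 := by
      rw [integral_sub (aux_integrable_of_bdd (hHmeas x₁) (hHbd x₁))
        (aux_integrable_of_bdd (hHmeas x) (hHbd x)), hHmean, hHmean, sub_self]
    have hterm := hDoeb _ hgmeas _ hgbd hgmean
    have hsub : ∀ j : ℕ, (∫ w, H x₁ w ∂(iterK P0 j z)) - (∫ w, H x w ∂(iterK P0 j z))
        = ∫ w, (H x₁ w - H x w) ∂(iterK P0 j z) := by
      intro j
      haveI := hiterP0prob j z
      exact (integral_sub (aux_integrable_of_bdd (hHmeas x₁) (hHbd x₁))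
        (aux_integrable_of_bdd (hHmeas x) (hHbd x))).symm
    have hptbd : ∀ j : ℕ, |(∫ w, H x₁ w ∂(iterK P0 j z)) - ∫ w, H x w ∂(iterK P0 j z)|
        ≤ 2 * ((2 * CG) * dist x₁ x) * ρ ^ (j / n₀) := by
      intro j
      rw [hsub j]
      exact hterm j z
    have hdsum : Summable fun j : ℕ =>
        (∫ w, H x₁ w ∂(iterK P0 j z)) - ∫ w, H x w ∂(iterK P0 j z) :=
      (hFsum x₁ z).sub (hFsum x z)
    have habs : Summable fun j : ℕ =>
        |(∫ w, H x₁ w ∂(iterK P0 j z)) - ∫ w, H x w ∂(iterK P0 j z)| :=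
      Summable.of_nonneg_of_le (fun j => abs_nonneg _) hptbd (hρsum.mul_left _)
    rw [hU0def, hU0def, ← Summable.tsum_sub (hFsum x₁ z) (hFsum x z)]
    calc |∑' j : ℕ, ((∫ w, H x₁ w ∂(iterK P0 j z)) - ∫ w, H x w ∂(iterK P0 j z))|
        ≤ ∑' j : ℕ, |(∫ w, H x₁ w ∂(iterK P0 j z)) - ∫ w, H x w ∂(iterK P0 j z)| := by
          simpa [Real.norm_eq_abs] using
            norm_tsum_le_tsum_norm (f := fun j : ℕ =>
              (∫ w, H x₁ w ∂(iterK P0 j z)) - ∫ w, H x w ∂(iterK P0 j z))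
              (by simpa [Real.norm_eq_abs] using habs)
      _ ≤ ∑' j : ℕ, 2 * ((2 * CG) * dist x₁ x) * ρ ^ (j / n₀) :=
          Summable.tsum_le_tsum hptbd habs (hρsum.mul_left _)
      _ = 2 * ((2 * CG) * dist x₁ x) * Sρ := by rw [tsum_mul_left]
      _ = CL * dist x₁ x := by rw [hCL]; ring
  have hU0meas : ∀ x, Measurable fun z => U0 x z := by
    intro x
    have htend : Tendsto (fun n => fun z => ∑ j ∈ Finset.range n, ∫ w, H x w ∂(iterK P0 j z))
        atTop (nhds (fun z => U0 x z)) := by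
      rw [tendsto_pi_nhds]
      intro z
      simpa [hU0def] using (hFsum x z).hasSum.tendsto_sum_nat
    exact measurable_of_tendsto_metrizable
      (fun n => Finset.measurable_sum _ (fun j _ => hFmeas x j)) htend
  have hPU0meas : ∀ x, Measurable fun z => ∫ w, U0 x w ∂(P0 z) := fun x =>
    aux_measurable_integral hP0meas hP0prob (hU0meas x) (hU0bd x)
  have hPU0bd : ∀ x z, |∫ w, U0 x w ∂(P0 z)| ≤ B0 := by
    intro x z
    haveI := hP0prob z
    exact aux_abs_integral_le (aux_integrable_of_bdd (hU0meas x) (hU0bd x)) (hU0bd x)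
  have hPU0lip : ∀ x₁ x z, |(∫ w, U0 x₁ w ∂(P0 z)) - ∫ w, U0 x w ∂(P0 z)| ≤ CL * dist x₁ x := by
    intro x₁ x z
    haveI := hP0prob z
    rw [← integral_sub (aux_integrable_of_bdd (hU0meas x₁) (hU0bd x₁))
      (aux_integrable_of_bdd (hU0meas x) (hU0bd x))]
    exact aux_abs_integral_le ((aux_integrable_of_bdd (hU0meas x₁) (hU0bd x₁)).sub
      (aux_integrable_of_bdd (hU0meas x) (hU0bd x))) (fun w => hU0lip x₁ x w)
  -- conclusion
  refine ⟨2 * B0 * CL, ?_⟩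
  intro x x₁
  have hΓdef : ∀ u v, Γcov u v = ∫ z,
      (U0 u z * U0 v z - (∫ w, U0 u w ∂(P0 z)) * (∫ w, U0 v w ∂(P0 z))) ∂π' := fun u v => rfl
  have hintegg : ∀ u v : ↥S, Integrable
      (fun z => U0 u z * U0 v z - (∫ w, U0 u w ∂(P0 z)) * (∫ w, U0 v w ∂(P0 z))) π' := by
    intro u v
    apply aux_integrable_of_bdd (M := B0 * B0 + B0 * B0)
    · exact ((hU0meas u).mul (hU0meas v)).sub ((hPU0meas u).mul (hPU0meas v))
    · intro z
      have h1 : |U0 u z * U0 v z| ≤ B0 * B0 := by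
        rw [abs_mul]; exact mul_le_mul (hU0bd u z) (hU0bd v z) (abs_nonneg _) hB00
      have h2 : |(∫ w, U0 u w ∂(P0 z)) * (∫ w, U0 v w ∂(P0 z))| ≤ B0 * B0 := by
        rw [abs_mul]; exact mul_le_mul (hPU0bd u z) (hPU0bd v z) (abs_nonneg _) hB00
      calc |U0 u z * U0 v z - (∫ w, U0 u w ∂(P0 z)) * (∫ w, U0 v w ∂(P0 z))|
          ≤ |U0 u z * U0 v z| + |(∫ w, U0 u w ∂(P0 z)) * (∫ w, U0 v w ∂(P0 z))| := tri _ _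
        _ ≤ B0 * B0 + B0 * B0 := add_le_add h1 h2
  have hpt : ∀ z, |(U0 x₁ z * U0 x z - (∫ w, U0 x₁ w ∂(P0 z)) * (∫ w, U0 x w ∂(P0 z)))
      - (U0 x z * U0 x z - (∫ w, U0 x w ∂(P0 z)) * (∫ w, U0 x w ∂(P0 z)))|
      ≤ 2 * B0 * CL * dist x₁ x := by
    intro z
    have hr : (U0 x₁ z * U0 x z - (∫ w, U0 x₁ w ∂(P0 z)) * (∫ w, U0 x w ∂(P0 z)))
        - (U0 x z * U0 x z - (∫ w, U0 x w ∂(P0 z)) * (∫ w, U0 x w ∂(P0 z)))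
        = (U0 x₁ z - U0 x z) * U0 x z
          - ((∫ w, U0 x₁ w ∂(P0 z)) - ∫ w, U0 x w ∂(P0 z)) * (∫ w, U0 x w ∂(P0 z)) := by ring
    rw [hr]
    have e1 : |(U0 x₁ z - U0 x z) * U0 x z| ≤ (CL * dist x₁ x) * B0 := by
      rw [abs_mul]
      exact mul_le_mul (hU0lip x₁ x z) (hU0bd x z) (abs_nonneg _) (mul_nonneg hCL0 dist_nonneg)
    have e2 : |((∫ w, U0 x₁ w ∂(P0 z)) - ∫ w, U0 x w ∂(P0 z)) * (∫ w, U0 x w ∂(P0 z))|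
        ≤ (CL * dist x₁ x) * B0 := by
      rw [abs_mul]
      exact mul_le_mul (hPU0lip x₁ x z) (hPU0bd x z) (abs_nonneg _) (mul_nonneg hCL0 dist_nonneg)
    calc |(U0 x₁ z - U0 x z) * U0 x z
          - ((∫ w, U0 x₁ w ∂(P0 z)) - ∫ w, U0 x w ∂(P0 z)) * (∫ w, U0 x w ∂(P0 z))|
        ≤ |(U0 x₁ z - U0 x z) * U0 x z|
          + |((∫ w, U0 x₁ w ∂(P0 z)) - ∫ w, U0 x w ∂(P0 z)) * (∫ w, U0 x w ∂(P0 z))| := tri _ _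
      _ ≤ (CL * dist x₁ x) * B0 + (CL * dist x₁ x) * B0 := add_le_add e1 e2
      _ = 2 * B0 * CL * dist x₁ x := by ring
  have hfinal : |Γcov x₁ x - Γcov x x| ≤ 2 * B0 * CL * dist x₁ x := by
    rw [hΓdef, hΓdef, ← integral_sub (hintegg x₁ x) (hintegg x x)]
    exact aux_abs_integral_le ((hintegg x₁ x).sub (hintegg x x)) hpt
  rwa [hdist x₁ x] at hfinal

end
end

section
/- Doeblin minorization of the limiting equi-energy kernel (claim of Section 2.3). Suppose θ ∈ (0, 1) and that E is bounded below, so that r_max := sup_x r(x) = e^{−τ inf E} < ∞. Then the limiting kernel K satisfies the whole-space minorization K(x, A) ≥ ε π(A) for all x ∈ X and A ∈ B, with ε := (1 − θ) Z / (Z' r_max) > 0; in particular K is uniformly ergodic, irrespective of the kernel P. -/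
open MeasureTheory Filter
open scoped ENNReal NNReal

noncomputable section

variable {𝒳 : Type*} [MeasurableSpace 𝒳]

/-- **Doeblin minorization of the limiting equi-energy kernel** (claim of Section 2.3):
if `θ ∈ (0,1)` and `E` is bounded below, so that `r_max = sup_x r(x) = e^{−τ inf E} < ∞`,
then the limiting kernel `K = θP + (1−θ)R` satisfies `K(x, A) ≥ ε π(A)` for all `x, A`,
with `ε = (1 − θ) Z / (Z' r_max) > 0`; in particular `K` is uniformly ergodic. -/
theorem limiting_kernel_doeblin_minorization
    [TopologicalSpace 𝒳] [PolishSpace 𝒳] [BorelSpace 𝒳] [Nonempty 𝒳]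
    (lam : Measure 𝒳) [SigmaFinite lam]
    (E : 𝒳 → ℝ) (hEcont : Continuous E) (hEbdd : BddBelow (Set.range E))
    (t t' τ : ℝ) (ht : 0 < t) (htt' : t < t') (hτ : τ = 1 / t - 1 / t')
    (Z Z' : ℝ)
    (hZ : Z = ∫ x, Real.exp (-E x / t) ∂lam) (hZ' : Z' = ∫ x, Real.exp (-E x / t') ∂lam)
    (hZint : Integrable (fun x => Real.exp (-E x / t)) lam)
    (hZ'int : Integrable (fun x => Real.exp (-E x / t')) lam)
    (hZpos : 0 < Z) (hZ'pos : 0 < Z')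
    (piT piT' : Measure 𝒳) [IsProbabilityMeasure piT] [IsProbabilityMeasure piT']
    (hπ : ∀ A : Set 𝒳, MeasurableSet A →
      piT A = ENNReal.ofReal ((∫ x in A, Real.exp (-E x / t) ∂lam) / Z))
    (hπ' : ∀ A : Set 𝒳, MeasurableSet A →
      piT' A = ENNReal.ofReal ((∫ x in A, Real.exp (-E x / t') ∂lam) / Z'))
    (P : 𝒳 → Measure 𝒳) (hPmeas : Measurable P) (hPprob : ∀ x, IsProbabilityMeasure (P x))
    (hPinv : piT.bind P = piT)
    (θ : ℝ) (hθ : θ ∈ Set.Ioo (0 : ℝ) 1) :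
    0 < (1 - θ) * Z / (Z' * Real.exp (-τ * sInf (Set.range E))) ∧
    ∀ x : 𝒳, ∀ A : Set 𝒳, MeasurableSet A →
      ENNReal.ofReal ((1 - θ) * Z / (Z' * Real.exp (-τ * sInf (Set.range E)))) * piT A
        ≤ adaptK θ τ E P piT' x A := by
  obtain ⟨hθ0, hθ1⟩ := hθ
  have ht' : 0 < t' := ht.trans htt'
  have hτ0 : 0 < τ := by
    rw [hτ]
    have := one_div_lt_one_div_of_lt ht htt'
    linarith
  set m := sInf (Set.range E) with hm
  set rmax := Real.exp (-τ * m) with hrmaxdef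
  have hrmaxpos : 0 < rmax := Real.exp_pos _
  have hEm : ∀ x, m ≤ E x := fun x => csInf_le hEbdd ⟨x, rfl⟩
  have hrle : ∀ x, Real.exp (-τ * E x) ≤ rmax := by
    intro x
    exact Real.exp_le_exp.2 (by nlinarith [hEm x])
  have hεpos : 0 < (1 - θ) * Z / (Z' * rmax) :=
    div_pos (mul_pos (by linarith) hZpos) (mul_pos hZ'pos hrmaxpos)
  refine ⟨hεpos, fun x A hA => ?_⟩
  have hEmeas : Measurable E := hEcont.measurable
  have haccmeas : Measurable fun y => accept τ E y x :=
    measurable_const.min ((Real.measurable_exp.comp (hEmeas.const_mul (-τ))).div_const _)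
  have hKmeas : Measurable fun y => swapK τ E y x := by
    apply Measure.measurable_of_measurable_coe
    intro s hs
    simp only [swapK, Measure.coe_add, Pi.add_apply, Measure.smul_apply, smul_eq_mul,
      Measure.dirac_apply' _ hs]
    exact ((ENNReal.measurable_ofReal.comp haccmeas).mul
        ((measurable_one.indicator hs))).add
      ((ENNReal.measurable_ofReal.comp (measurable_const.sub haccmeas)).mul measurable_const)
  -- pointwise key inequality
  have key : ∀ y, ENNReal.ofReal rmax⁻¹ * ENNReal.ofReal (Real.exp (-E y / t)) ≤
      ENNReal.ofReal (Real.exp (-E y / t')) * ENNReal.ofReal (accept τ E y x) := by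
    intro y
    rw [← ENNReal.ofReal_mul (by positivity), ← ENNReal.ofReal_mul (Real.exp_pos _).le]
    apply ENNReal.ofReal_le_ofReal
    have hacc : Real.exp (-τ * E y) / rmax ≤ accept τ E y x := by
      apply le_min
      · rw [div_le_one hrmaxpos]; exact hrle y
      · gcongr
        exact hrle x
    have hsplit : -E y / t = -E y / t' + -τ * E y := by
      rw [hτ]; field_simp; ring
    calc rmax⁻¹ * Real.exp (-E y / t)
        = Real.exp (-E y / t') * (Real.exp (-τ * E y) / rmax) := by
          rw [hsplit, Real.exp_add]; ring
      _ ≤ Real.exp (-E y / t') * accept τ E y x :=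
          mul_le_mul_of_nonneg_left hacc (Real.exp_pos _).le
  -- densities
  have hpi'_re : ∀ B : Set 𝒳, MeasurableSet B →
      piT' B = ENNReal.ofReal Z'⁻¹ * ∫⁻ y in B, ENNReal.ofReal (Real.exp (-E y / t')) ∂lam := by
    intro B hB
    rw [hπ' B hB, div_eq_inv_mul, ENNReal.ofReal_mul (inv_nonneg.2 hZ'pos.le),
      MeasureTheory.ofReal_integral_eq_lintegral_ofReal (hZ'int.restrict)
        (ae_of_all _ fun y => (Real.exp_pos _).le)]
  have hpi_re : ∀ B : Set 𝒳, MeasurableSet B →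
      piT B = ENNReal.ofReal Z⁻¹ * ∫⁻ y in B, ENNReal.ofReal (Real.exp (-E y / t)) ∂lam := by
    intro B hB
    rw [hπ B hB, div_eq_inv_mul, ENNReal.ofReal_mul (inv_nonneg.2 hZpos.le),
      MeasureTheory.ofReal_integral_eq_lintegral_ofReal (hZint.restrict)
        (ae_of_all _ fun y => (Real.exp_pos _).le)]
  have hpiT'_eq : piT' = (ENNReal.ofReal Z'⁻¹) •
      lam.withDensity (fun y => ENNReal.ofReal (Real.exp (-E y / t'))) := by
    ext B hB
    rw [hpi'_re B hB, Measure.smul_apply, smul_eq_mul, withDensity_apply _ hB]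
  -- bind lower bound
  have hmono : ∀ y, A.indicator (fun y => ENNReal.ofReal (accept τ E y x)) y ≤
      swapK τ E y x A := by
    intro y
    by_cases hy : y ∈ A
    · simp only [Set.indicator_of_mem hy, swapK, Measure.coe_add, Pi.add_apply,
        Measure.smul_apply, smul_eq_mul, Measure.dirac_apply_of_mem hy, mul_one]
      exact le_self_add
    · simp [Set.indicator_of_notMem hy]
  have hbind_ge : ∫⁻ y in A, ENNReal.ofReal (accept τ E y x) ∂piT' ≤
      (piT'.bind fun y => swapK τ E y x) A := by
    rw [Measure.bind_apply hA hKmeas.aemeasurable, ← lintegral_indicator hA]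
    exact lintegral_mono hmono
  have hg'meas : Measurable fun y => ENNReal.ofReal (Real.exp (-E y / t')) :=
    ENNReal.measurable_ofReal.comp (Real.measurable_exp.comp (hEmeas.neg.div_const _))
  have hcalc : ENNReal.ofReal Z'⁻¹ * (ENNReal.ofReal rmax⁻¹ *
      ∫⁻ y in A, ENNReal.ofReal (Real.exp (-E y / t)) ∂lam) ≤
      ∫⁻ y in A, ENNReal.ofReal (accept τ E y x) ∂piT' := by
    rw [hpiT'_eq, Measure.restrict_smul, lintegral_smul_measure,
      MeasureTheory.restrict_withDensity hA,
      lintegral_withDensity_eq_lintegral_mul _ hg'meas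
        (show Measurable fun y => ENNReal.ofReal (accept τ E y x) from
          ENNReal.measurable_ofReal.comp haccmeas)]
    apply mul_le_mul_right
    rw [← MeasureTheory.lintegral_const_mul' _ _ ENNReal.ofReal_ne_top]
    exact lintegral_mono fun y => key y
  -- combine
  calc ENNReal.ofReal ((1 - θ) * Z / (Z' * rmax)) * piT A
      = ENNReal.ofReal ((1 - θ) * Z / (Z' * rmax)) * ENNReal.ofReal Z⁻¹ *
        ∫⁻ y in A, ENNReal.ofReal (Real.exp (-E y / t)) ∂lam := by
        rw [hpi_re A hA, mul_assoc]
    _ = ENNReal.ofReal (1 - θ) * (ENNReal.ofReal Z'⁻¹ * (ENNReal.ofReal rmax⁻¹ *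
        ∫⁻ y in A, ENNReal.ofReal (Real.exp (-E y / t)) ∂lam)) := by
        have hco : (1 - θ) * Z / (Z' * rmax) * Z⁻¹ = (1 - θ) * (Z'⁻¹ * rmax⁻¹) := by
          field_simp
        rw [← ENNReal.ofReal_mul hεpos.le, hco,
          ENNReal.ofReal_mul (by linarith : (0:ℝ) ≤ 1 - θ),
          ENNReal.ofReal_mul (inv_nonneg.2 hZ'pos.le), mul_assoc, mul_assoc]
    _ ≤ ENNReal.ofReal (1 - θ) * ∫⁻ y in A, ENNReal.ofReal (accept τ E y x) ∂piT' :=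
        mul_le_mul_right hcalc _
    _ ≤ ENNReal.ofReal (1 - θ) * (piT'.bind fun y => swapK τ E y x) A :=
        mul_le_mul_right hbind_ge _
    _ ≤ adaptK θ τ E P piT' x A := by
        simp only [adaptK, Measure.coe_add, Pi.add_apply, Measure.smul_apply, smul_eq_mul]
        exact le_add_self


end
end
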